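/- Let X₁, X₂ be compact metric spaces with Borel probability measures μ₁, μ₂, where μ₂ has full support and X₂ has a countable basis. Equip X = X₁ × X₂ with the max metric, let (r_n) be positive reals, let (ω_n) be i.i.d. with law μ₁ × μ₂, and let E = limsup_n B(ω_n, r_n). Define A = {x₁ ∈ X₁ : ∑_n μ₁(B(x₁, r_n)) = ∞} and B(ω) = {x₁ ∈ X₁ : the fibre E^{x₁}(ω) = {x₂ : (x₁,x₂) ∈ E(ω)} is residual in X₂}. Then almost surely μ₁(A \ B(ω)) = 0. -/

import Mathlib

open MeasureTheory Metric Set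

/-- Lemma (A\B): almost surely, μ₁-a.e. point x₁ with divergent series
∑ μ₁(B(x₁,r_n)) has a residual fibre E^{x₁}. -/
theorem ae_fibre_residual_on_divergence_set
    {X₁ X₂ : Type*} [MetricSpace X₁] [CompactSpace X₁]
    [MetricSpace X₂] [CompactSpace X₂] [SecondCountableTopology X₂]
    [MeasurableSpace X₁] [BorelSpace X₁] [MeasurableSpace X₂] [BorelSpace X₂]
    (μ₁ : Measure X₁) [IsProbabilityMeasure μ₁]
    (μ₂ : Measure X₂) [IsProbabilityMeasure μ₂]
    (hfull : ∀ U : Set X₂, IsOpen U → U.Nonempty → 0 < μ₂ U)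
    (r : ℕ → ℝ) (hr : ∀ n, 0 < r n)
    (P : Measure (ℕ → X₁ × X₂)) [IsProbabilityMeasure P]
    (hP : ∀ (s : Finset ℕ) (A : ℕ → Set (X₁ × X₂)), (∀ n, MeasurableSet (A n)) →
      P {ω | ∀ n ∈ s, ω n ∈ A n} = ∏ n ∈ s, (μ₁.prod μ₂) (A n))
    (E : (ℕ → X₁ × X₂) → Set (X₁ × X₂))
    (hE : ∀ ω, E ω = ⋂ N, ⋃ n, ⋃ (_ : N ≤ n), ball (ω n) (r n))
    (A : Set X₁) (hA : A = {x₁ : X₁ | ∑' n, μ₁ (ball x₁ (r n)) = ⊤})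
    (B : (ℕ → X₁ × X₂) → Set X₁)
    (hB : ∀ ω, B ω = {x₁ : X₁ | {x₂ : X₂ | (x₁, x₂) ∈ E ω} ∈ residual X₂}) :
    ∀ᵐ ω ∂P, μ₁ (A \ B ω) = 0 := by
  classical
  obtain ⟨b, hbc, hbne, hbasis⟩ := TopologicalSpace.exists_countable_basis X₂
  haveI : Countable ↑b := hbc.to_subtype
  -- target sets
  set S : X₁ → ↑b → ℕ → Set (X₁ × X₂) :=
    fun x₁ V n => ball x₁ (r n) ×ˢ thickening (r n) (V : Set X₂) with hS
  have hSmeas : ∀ (x₁ : X₁) (V : ↑b) (n : ℕ), MeasurableSet (S x₁ V n) := fun x₁ V n =>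
    (isOpen_ball.prod isOpen_thickening).measurableSet
  -- the auxiliary set C ω ⊆ B ω
  set C : (ℕ → X₁ × X₂) → Set X₁ := fun ω =>
    {x₁ | ∀ V : ↑b, ∀ N : ℕ, ∃ n, N ≤ n ∧ ω n ∈ S x₁ V n} with hC
  -- deterministic inclusion C ω ⊆ B ω
  have hCB : ∀ ω, C ω ⊆ B ω := by
    intro ω x₁ hx₁
    rw [hB]
    simp only [mem_setOf_eq]
    have hball : ∀ n : ℕ, (ball (ω n) (r n) : Set (X₁ × X₂))
        = ball (ω n).1 (r n) ×ˢ ball (ω n).2 (r n) := fun n => by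
      rw [ball_prod_same]
    have hfib : {x₂ : X₂ | (x₁, x₂) ∈ E ω}
        = ⋂ N, ⋃ n, ⋃ (_ : N ≤ n), ⋃ (_ : x₁ ∈ ball (ω n).1 (r n)), ball (ω n).2 (r n) := by
      rw [hE]
      ext x₂
      simp only [mem_setOf_eq, mem_iInter, mem_iUnion]
      constructor
      · intro h N
        obtain ⟨n, hn, hmem⟩ := h N
        rw [hball n] at hmem
        exact ⟨n, hn, hmem.1, hmem.2⟩
      · intro h N
        obtain ⟨n, hn, h1, h2⟩ := h N
        refine ⟨n, hn, ?_⟩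
        rw [hball n]
        exact ⟨h1, h2⟩
    rw [hfib]
    refine countable_iInter_mem.mpr fun N => residual_of_dense_open ?_ ?_
    · exact isOpen_iUnion fun n => isOpen_iUnion fun _ => isOpen_iUnion fun _ => isOpen_ball
    · rw [dense_iff_inter_open]
      intro U hU hUne
      obtain ⟨x, hxU⟩ := hUne
      obtain ⟨V, hVb, hxV, hVU⟩ := hbasis.exists_subset_of_mem_open hxU hU
      obtain ⟨n, hn, hmem⟩ := hx₁ ⟨V, hVb⟩ N
      have h1 : (ω n).1 ∈ ball x₁ (r n) := hmem.1
      have h2 : (ω n).2 ∈ thickening (r n) V := hmem.2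
      obtain ⟨z, hzV, hz⟩ := mem_thickening_iff.mp h2
      refine ⟨z, hVU hzV, ?_⟩
      simp only [mem_iUnion]
      exact ⟨n, hn, by simpa [mem_ball, dist_comm] using h1, by simpa [mem_ball, dist_comm] using hz⟩
  -- measurability facts
  have hballmeas : ∀ ρ : ℝ, Measurable (fun x : X₁ => μ₁ (ball x ρ)) := by
    intro ρ
    have hs : MeasurableSet {p : X₁ × X₁ | dist p.2 p.1 < ρ} :=
      (isOpen_lt (continuous_dist.comp (continuous_snd.prodMk continuous_fst))
        continuous_const).measurableSet
    have := measurable_measure_prodMk_left (ν := μ₁) hs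
    simpa [ball, preimage] using this
  have hAmeas : MeasurableSet A := by
    rw [hA]
    have : Measurable fun x₁ : X₁ => ∑' n, μ₁ (ball x₁ (r n)) :=
      Measurable.ennreal_tsum fun n => hballmeas (r n)
    exact this (measurableSet_singleton ⊤)
  -- the joint set D
  set D : Set ((ℕ → X₁ × X₂) × X₁) := {q | q.2 ∈ A ∧ q.2 ∉ C q.1} with hD
  have hDmeas : MeasurableSet D := by
    have hCset : MeasurableSet {q : (ℕ → X₁ × X₂) × X₁ | q.2 ∈ C q.1} := by
      have : {q : (ℕ → X₁ × X₂) × X₁ | q.2 ∈ C q.1}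
          = ⋂ (V : ↑b), ⋂ (N : ℕ), ⋃ (n : ℕ), ⋃ (_ : N ≤ n),
            ({q : (ℕ → X₁ × X₂) × X₁ | dist (q.1 n).1 q.2 < r n}
              ∩ {q | (q.1 n).2 ∈ thickening (r n) (V : Set X₂)}) := by
        ext q
        simp only [hC, mem_setOf_eq, mem_iInter, mem_iUnion, mem_inter_iff, hS,
          Set.mem_prod, mem_ball, exists_prop]
      rw [this]
      refine MeasurableSet.iInter fun V => MeasurableSet.iInter fun N =>
        MeasurableSet.iUnion fun n => MeasurableSet.iUnion fun _ => MeasurableSet.inter ?_ ?_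
      · have hmap : Measurable fun q : (ℕ → X₁ × X₂) × X₁ => ((q.1 n).1, q.2) :=
          (((measurable_pi_apply n).comp measurable_fst).fst).prodMk measurable_snd
        have hopen : MeasurableSet {p : X₁ × X₁ | dist p.1 p.2 < r n} :=
          (isOpen_lt continuous_dist continuous_const).measurableSet
        exact hmap hopen
      · have hmap : Measurable fun q : (ℕ → X₁ × X₂) × X₁ => (q.1 n).2 :=
          ((measurable_pi_apply n).comp measurable_fst).snd
        exact hmap isOpen_thickening.measurableSet
    exact (measurable_snd hAmeas).inter hCset.compl
  -- probabilistic core: for each x₁ ∈ A, a.s. x₁ ∈ C ω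
  have hkey : ∀ x₁ ∈ A, P {ω | (ω, x₁) ∈ D} = 0 := by
    intro x₁ hx₁
    rw [hA] at hx₁
    have : ∀ᵐ ω ∂P, x₁ ∈ C ω := by
      rw [hC]
      simp only [mem_setOf_eq]
      rw [ae_all_iff]
      intro V
      set s : ℕ → Set (ℕ → X₁ × X₂) := fun n => (fun ω => ω n) ⁻¹' (S x₁ V n) with hs
      have hsm : ∀ n, MeasurableSet (s n) := fun n =>
        (measurable_pi_apply n) (hSmeas x₁ V n)
      have hsingle : ∀ n, P (s n) = (μ₁.prod μ₂) (S x₁ V n) := by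
        intro n
        have := hP {n} (S x₁ V) (hSmeas x₁ V)
        simp only [Finset.mem_singleton, forall_eq, Finset.prod_singleton] at this
        exact this
      have hindep : ProbabilityTheory.iIndepSet s P := by
        rw [ProbabilityTheory.iIndepSet_iff_meas_biInter hsm]
        intro F
        have h1 : (⋂ i ∈ F, s i) = {ω | ∀ n ∈ F, ω n ∈ S x₁ V n} := by
          ext ω; simp [hs]
        rw [h1, hP F (S x₁ V) (hSmeas x₁ V)]
        exact Finset.prod_congr rfl fun n _ => (hsingle n).symm
      have hVopen : IsOpen (V : Set X₂) := hbasis.isOpen V.2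
      have hVne : (V : Set X₂).Nonempty := by
        rw [nonempty_iff_ne_empty]
        intro h
        exact hbne (h ▸ V.2)
      have hVpos : μ₂ (V : Set X₂) ≠ 0 := (hfull V hVopen hVne).ne'
      have hsum : (∑' n, P (s n)) = ⊤ := by
        refine le_antisymm le_top ?_
        have hle : ∀ n, μ₁ (ball x₁ (r n)) * μ₂ (V : Set X₂) ≤ P (s n) := by
          intro n
          rw [hsingle n, hS, Measure.prod_prod]
          exact mul_le_mul_right (measure_mono (self_subset_thickening (hr n) _)) _
        calc (⊤ : ENNReal) = (∑' n, μ₁ (ball x₁ (r n))) * μ₂ (V : Set X₂) := by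
              rw [hx₁, ENNReal.top_mul hVpos]
          _ = ∑' n, μ₁ (ball x₁ (r n)) * μ₂ (V : Set X₂) := (ENNReal.tsum_mul_right).symm
          _ ≤ ∑' n, P (s n) := ENNReal.tsum_le_tsum hle
      have hlim := ProbabilityTheory.measure_limsup_eq_one hsm hindep hsum
      have hset : Filter.limsup s Filter.atTop
          = {ω | ∀ N : ℕ, ∃ n, N ≤ n ∧ ω n ∈ S x₁ V n} := by
        ext ω
        rw [Filter.mem_limsup_iff_frequently_mem, Filter.frequently_atTop]
        simp [hs]
      have hone : P {ω | ∀ N : ℕ, ∃ n, N ≤ n ∧ ω n ∈ S x₁ V n} = 1 := by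
        rw [← hset]; exact hlim
      have hms : MeasurableSet {ω : ℕ → X₁ × X₂ | ∀ N : ℕ, ∃ n, N ≤ n ∧ ω n ∈ S x₁ V n} := by
        have : {ω : ℕ → X₁ × X₂ | ∀ N : ℕ, ∃ n, N ≤ n ∧ ω n ∈ S x₁ V n}
            = ⋂ N, ⋃ n, ⋃ (_ : N ≤ n), s n := by
          ext ω; simp [hs]
        rw [this]
        exact MeasurableSet.iInter fun N => MeasurableSet.iUnion fun n =>
          MeasurableSet.iUnion fun _ => hsm n
      rw [ae_iff]
      exact (prob_compl_eq_zero_iff hms).mpr hone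
    have h0 : P {ω | ¬ x₁ ∈ C ω} = 0 := ae_iff.mp this
    exact measure_mono_null (fun ω h => h.2) h0
  -- Fubini: the product measure of D is zero
  have h2 : (P.prod μ₁) D = 0 := by
    rw [Measure.prod_apply_symm hDmeas]
    have hz : ∀ x₁ : X₁, P ((fun ω => (ω, x₁)) ⁻¹' D) = 0 := by
      intro x₁
      by_cases hx : x₁ ∈ A
      · exact hkey x₁ hx
      · have : (fun ω : ℕ → X₁ × X₂ => (ω, x₁)) ⁻¹' D = ∅ := by
          ext ω; simp only [hD, mem_preimage, mem_setOf_eq, mem_empty_iff_false, iff_false]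
          exact fun h => hx h.1
        rw [this, measure_empty]
    simp only [hz, lintegral_zero]
  have hpre : ∀ ω, Prod.mk ω ⁻¹' D = A \ C ω := by
    intro ω; ext x
    simp only [hD, mem_preimage, mem_setOf_eq, mem_diff]
  have hmeasf : Measurable fun ω => μ₁ (A \ C ω) := by
    have := measurable_measure_prodMk_left (ν := μ₁) hDmeas
    simpa only [hpre] using this
  have h1 : ∫⁻ ω, μ₁ (A \ C ω) ∂P = 0 := by
    calc ∫⁻ ω, μ₁ (A \ C ω) ∂P = ∫⁻ ω, μ₁ (Prod.mk ω ⁻¹' D) ∂P :=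
          lintegral_congr fun ω => by rw [hpre]
      _ = (P.prod μ₁) D := (Measure.prod_apply hDmeas).symm
      _ = 0 := h2
  have hae : ∀ᵐ ω ∂P, μ₁ (A \ C ω) = 0 := by
    have := (lintegral_eq_zero_iff hmeasf).mp h1
    filter_upwards [this] with ω hω using hω
  filter_upwards [hae] with ω hω
  exact le_antisymm
    (le_trans (measure_mono (diff_subset_diff_right (hCB ω))) hω.le) (zero_le)
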